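/- Let f: Ω → ℝ be α-Hölder. Then for every shift-invariant Borel probability measure μ on Ω and every y ∈ Ω, lim_{n→∞} (1/n) ∫_Ω S_n(f)(x_{Λ_n} y_{Λ_n^c}) dμ(x) = ∫_Ω f dμ. -/

import Mathlib

open MeasureTheory Filter
open scoped Classical

set_option linter.unusedSectionVars false

noncomputable section

namespace Paper

variable {A : Type*} [MetricSpace A] [CompactSpace A] [MeasurableSpace A] [BorelSpace A]

/-- The left shift `σ` on `Ω = Aᴺ`. -/
def shift (x : ℕ → A) : ℕ → A := fun n => x (n + 1)

/-- Prepend a symbol: `cons a x = (a, x₀, x₁, …)`. -/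
def cons (a : A) (x : ℕ → A) : ℕ → A := fun n =>
  match n with
  | 0 => a
  | n + 1 => x n

/-- The metric `d_Ω` on `Ω`. -/
def dOmega (x y : ℕ → A) : ℝ :=
  ∑' n : ℕ, (1 / 2 : ℝ) ^ (n + 1) * (dist (x n) (y n) / (1 + dist (x n) (y n)))

/-- `f` is `α`-Hölder with respect to `d_Ω`. -/
def IsHolder (α : ℝ) (f : (ℕ → A) → ℝ) : Prop :=
  ∃ C : ℝ, 0 ≤ C ∧ ∀ x y, |f x - f y| ≤ C * dOmega x y ^ α

/-- The Ruelle transfer operator with a priori measure `p`. -/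
def ruelle (p : Measure A) (f φ : (ℕ → A) → ℝ) : (ℕ → A) → ℝ :=
  fun x => ∫ a, Real.exp (f (cons a x)) * φ (cons a x) ∂p

/-- The normalized potential `f̄ = f + log h - log (h ∘ σ) - log λ`. -/
def fbar (f h : (ℕ → A) → ℝ) (lam : ℝ) : (ℕ → A) → ℝ :=
  fun x => f x + Real.log (h x) - Real.log (h (shift x)) - Real.log lam

/-- Projection on the first `n` coordinates. -/
def proj (n : ℕ) (x : ℕ → A) : Fin n → A := fun i => x i

/-- Relative entropy `H(μ|ν)` of two measures, with value `+∞` unless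
`μ ≪ ν` and the entropy integral is finite. -/
def relEnt {X : Type*} [MeasurableSpace X] (μ ν : Measure X) : EReal :=
  if μ ≪ ν ∧ Integrable (fun x => Real.log (μ.rnDeriv ν x).toReal) μ then
    ((∫ x, Real.log (μ.rnDeriv ν x).toReal ∂μ : ℝ) : EReal)
  else ⊤

/-- Relative entropy `H_{Λ_n}(μ|ν)` on the σ-algebra of the first `n` coordinates. -/
def relEntN (n : ℕ) (μ ν : Measure (ℕ → A)) : EReal :=
  relEnt (μ.map (proj n)) (ν.map (proj n))

/-- The entropy `H_{Λ_n}(μ) = -H_{Λ_n}(μ | pᴺ)` relative to the a priori measure `p`. -/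
def finEnt (p : Measure A) (μ : Measure (ℕ → A)) (n : ℕ) : EReal :=
  - relEnt (μ.map (proj n)) (Measure.pi fun _ : Fin n => p)

/-- The specific entropy `h^s(μ) = lim_n H_{Λ_n}(μ)/n` (defined as a `limsup`,
which coincides with the limit whenever the latter exists). -/
def specEnt (p : Measure A) (μ : Measure (ℕ → A)) : EReal :=
  Filter.atTop.limsup fun n : ℕ => ((n : ℝ)⁻¹ : EReal) * finEnt p μ n

/-- Birkhoff sum `S_n(f)`. -/
def birkhoff (n : ℕ) (f : (ℕ → A) → ℝ) (x : ℕ → A) : ℝ :=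
  ∑ i ∈ Finset.range n, f (shift^[i] x)

/-- The configuration `x_{Λ_n} y_{Λ_n^c}`. -/
def concatAt (n : ℕ) (x y : ℕ → A) : ℕ → A := fun i => if i < n then x i else y i

/-- Concatenation of a finite word with a configuration. -/
def wordCons (n : ℕ) (a : Fin n → A) (x : ℕ → A) : ℕ → A :=
  fun i => if h : i < n then a ⟨i, h⟩ else x (i - n)

def dterm (x y : ℕ → A) (n : ℕ) : ℝ :=
  (1 / 2 : ℝ) ^ (n + 1) * (dist (x n) (y n) / (1 + dist (x n) (y n)))

lemma dterm_nonneg (x y : ℕ → A) (n : ℕ) : 0 ≤ dterm x y n := by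
  unfold dterm
  have := dist_nonneg (x := x n) (y := y n)
  positivity

lemma dterm_le (x y : ℕ → A) (n : ℕ) : dterm x y n ≤ (1/2:ℝ)^(n+1) := by
  unfold dterm
  have hd := dist_nonneg (x := x n) (y := y n)
  have h1 : dist (x n) (y n) / (1 + dist (x n) (y n)) ≤ 1 := by
    rw [div_le_one (by linarith)]; linarith
  nlinarith [pow_pos (by norm_num : (0:ℝ) < 1/2) (n+1)]

lemma dterm_le_dist (x y : ℕ → A) (n : ℕ) : dterm x y n ≤ dist (x n) (y n) := by
  unfold dterm
  have hd := dist_nonneg (x := x n) (y := y n)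
  have hq : 0 ≤ dist (x n) (y n) / (1 + dist (x n) (y n)) := by positivity
  have h1 : dist (x n) (y n) / (1 + dist (x n) (y n)) ≤ dist (x n) (y n) := by
    rw [div_le_iff₀ (by linarith)]; nlinarith
  have h2 : (1/2:ℝ)^(n+1) ≤ 1 := by
    apply pow_le_one₀ <;> norm_num
  calc (1/2:ℝ)^(n+1) * (dist (x n) (y n) / (1 + dist (x n) (y n)))
      ≤ 1 * (dist (x n) (y n) / (1 + dist (x n) (y n))) :=
        mul_le_mul_of_nonneg_right h2 hq
    _ = dist (x n) (y n) / (1 + dist (x n) (y n)) := one_mul _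
    _ ≤ dist (x n) (y n) := h1

lemma summable_half : Summable (fun n : ℕ => (1/2:ℝ)^(n+1)) := by
  have h := (summable_geometric_of_lt_one (by norm_num : (0:ℝ) ≤ 1/2)
    (by norm_num : (1/2:ℝ) < 1)).mul_right (1/2:ℝ)
  refine h.congr fun n => ?_
  rw [← pow_succ]

lemma summable_dterm (x y : ℕ → A) : Summable (dterm x y) :=
  Summable.of_nonneg_of_le (dterm_nonneg x y) (dterm_le x y) summable_half

lemma dOmega_eq (x y : ℕ → A) : dOmega x y = ∑' n, dterm x y n := rfl

lemma dOmega_nonneg (x y : ℕ → A) : 0 ≤ dOmega x y :=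
  tsum_nonneg (dterm_nonneg x y)

lemma tsum_half_add (m : ℕ) : ∑' n : ℕ, (1/2:ℝ)^(n+m+1) = (1/2:ℝ)^m := by
  have h : ∀ n : ℕ, (1/2:ℝ)^(n+m+1) = (1/2:ℝ)^n * (1/2:ℝ)^(m+1) := by
    intro n; rw [← pow_add]; ring_nf
  rw [tsum_congr h, tsum_mul_right,
    tsum_geometric_of_lt_one (by norm_num : (0:ℝ) ≤ 1/2) (by norm_num : (1/2:ℝ) < 1)]
  rw [pow_succ]
  ring

lemma dOmega_le (x y : ℕ → A) (m : ℕ) :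
    dOmega x y ≤ (∑ n ∈ Finset.range m, dist (x n) (y n)) + (1/2:ℝ)^m := by
  rw [dOmega_eq, ← Summable.sum_add_tsum_nat_add m (summable_dterm x y)]
  apply add_le_add
  · exact Finset.sum_le_sum fun n _ => dterm_le_dist x y n
  · have hs1 : Summable (fun n : ℕ => dterm x y (n + m)) :=
      (summable_nat_add_iff (f := dterm x y) m).mpr (summable_dterm x y)
    have hs2 : Summable (fun n : ℕ => (1/2:ℝ)^(n+m+1)) :=
      (summable_nat_add_iff (f := fun k : ℕ => (1/2:ℝ)^(k+1)) m).mpr summable_half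
    calc ∑' n : ℕ, dterm x y (n + m) ≤ ∑' n : ℕ, (1/2:ℝ)^(n+m+1) :=
          Summable.tsum_le_tsum (fun n => dterm_le x y (n+m)) hs1 hs2
        _ = (1/2:ℝ)^m := tsum_half_add m

lemma dOmega_le_one (x y : ℕ → A) : dOmega x y ≤ 1 := by
  simpa using dOmega_le x y 0

lemma dOmega_le_pow (x y : ℕ → A) (m : ℕ) (h : ∀ i < m, x i = y i) :
    dOmega x y ≤ (1/2:ℝ)^m := by
  have h1 := dOmega_le x y m
  have hz : ∑ n ∈ Finset.range m, dist (x n) (y n) = 0 := by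
    apply Finset.sum_eq_zero
    intro n hn
    rw [h n (Finset.mem_range.mp hn), dist_self]
  rw [hz] at h1; simpa using h1

lemma dOmega_comm (x y : ℕ → A) : dOmega x y = dOmega y x := by
  unfold dOmega; congr 1; funext n; rw [dist_comm]


lemma dOmega_tendsto (x : ℕ → A) :
    Tendsto (fun y => dOmega x y) (nhds x) (nhds 0) := by
  refine Metric.tendsto_nhds.mpr fun ε hε => ?_
  obtain ⟨m, hm⟩ : ∃ m : ℕ, (1/2:ℝ)^m < ε/2 :=
    exists_pow_lt_of_lt_one (by positivity) (by norm_num)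
  set δ : ℝ := ε/(2*(m+1)) with hδdef
  have hδ : 0 < δ := by positivity
  have hev : ∀ᶠ y in nhds x, ∀ n ∈ Finset.range m, dist (x n) (y n) < δ := by
    rw [eventually_all_finset]
    intro n _
    have hc : Continuous fun y : ℕ → A => dist (x n) (y n) :=
      continuous_const.dist (continuous_apply n)
    have ht : Tendsto (fun y : ℕ → A => dist (x n) (y n)) (nhds x) (nhds 0) := by
      simpa using hc.tendsto x
    exact ht.eventually_lt_const hδ
  filter_upwards [hev] with y hy
  rw [Real.dist_eq, sub_zero, abs_of_nonneg (dOmega_nonneg x y)]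
  have h1 : ∑ n ∈ Finset.range m, dist (x n) (y n) ≤ m * δ := by
    calc ∑ n ∈ Finset.range m, dist (x n) (y n)
        ≤ ∑ _n ∈ Finset.range m, δ :=
          Finset.sum_le_sum fun n hn => (hy n hn).le
      _ = m * δ := by simp [mul_comm]
  have h2 : (m:ℝ) * δ ≤ ε/2 := by
    have h0 : ((m:ℝ)+1) ≠ 0 := by positivity
    have h3 : ((m:ℝ)+1) * δ = ε/2 := by
      rw [hδdef]; field_simp
    calc (m:ℝ) * δ ≤ ((m:ℝ)+1) * δ :=
          mul_le_mul_of_nonneg_right (by linarith) hδ.le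
      _ = ε/2 := h3
  calc dOmega x y ≤ (∑ n ∈ Finset.range m, dist (x n) (y n)) + (1/2:ℝ)^m :=
        dOmega_le x y m
    _ < ε/2 + ε/2 := by
        apply add_lt_add_of_le_of_lt (h1.trans h2) hm
    _ = ε := by ring

lemma continuous_of_holder {α : ℝ} (hα0 : 0 < α) {f : (ℕ → A) → ℝ}
    {C : ℝ} (hC : ∀ x y, |f x - f y| ≤ C * dOmega x y ^ α) : Continuous f := by
  rw [continuous_iff_continuousAt]
  intro x
  have h1 : Tendsto (fun y => C * dOmega x y ^ α) (nhds x) (nhds 0) := by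
    have h3 : ContinuousAt (fun t : ℝ => C * t ^ α) 0 :=
      continuousAt_const.mul (Real.continuousAt_rpow_const 0 α (Or.inr hα0.le))
    have h4 := h3.tendsto.comp (dOmega_tendsto x)
    simpa [Real.zero_rpow hα0.ne', Function.comp_def] using h4
  rw [ContinuousAt, tendsto_iff_dist_tendsto_zero]
  apply squeeze_zero (fun y => dist_nonneg) (fun y => ?_) h1
  rw [Real.dist_eq]
  calc |f y - f x| ≤ C * dOmega y x ^ α := hC y x
    _ = C * dOmega x y ^ α := by rw [dOmega_comm]

lemma shift_iterate (i : ℕ) (x : ℕ → A) (k : ℕ) : shift^[i] x k = x (k + i) := by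
  induction i generalizing x k with
  | zero => rfl
  | succ i ih =>
    rw [Function.iterate_succ_apply, ih]
    show x (k + i + 1) = x (k + (i + 1))
    ring_nf


lemma geom_sum_bound (r : ℝ) (hr0 : 0 ≤ r) (hr1 : r < 1) (n : ℕ) :
    ∑ i ∈ Finset.range n, r^(n-i) ≤ (1-r)⁻¹ := by
  have h1 : ∑ i ∈ Finset.range n, r^(n-i) = ∑ j ∈ Finset.range n, r^(j+1) := by
    rw [← Finset.sum_range_reflect (fun j => r^(j+1)) n]
    apply Finset.sum_congr rfl
    intro j hj
    have := Finset.mem_range.mp hj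
    congr 1
    omega
  rw [h1]
  calc ∑ j ∈ Finset.range n, r^(j+1)
      ≤ ∑ j ∈ Finset.range n, r^j :=
        Finset.sum_le_sum fun j _ => pow_le_pow_of_le_one hr0 hr1.le (Nat.le_succ j)
    _ ≤ ∑' j, r^j := Summable.sum_le_tsum _ (fun j _ => pow_nonneg hr0 j)
        (summable_geometric_of_lt_one hr0 hr1)
    _ = (1-r)⁻¹ := tsum_geometric_of_lt_one hr0 hr1

lemma pow_rpow_half (α : ℝ) (k : ℕ) : ((1/2:ℝ)^k) ^ α = ((1/2:ℝ)^α)^k := by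
  rw [← Real.rpow_natCast (1/2:ℝ) k, ← Real.rpow_mul (by norm_num), mul_comm,
    Real.rpow_mul (by norm_num), Real.rpow_natCast]

lemma birkhoff_bound (α C : ℝ) (hα0 : 0 < α) (hC0 : 0 ≤ C)
    (f : (ℕ → A) → ℝ) (hC : ∀ x y, |f x - f y| ≤ C * dOmega x y ^ α)
    (n : ℕ) (x y : ℕ → A) :
    |birkhoff n f (concatAt n x y) - birkhoff n f x| ≤ C * (1 - (1/2:ℝ)^α)⁻¹ := by
  set r := (1/2:ℝ)^α with hr
  have hr0 : 0 ≤ r := (Real.rpow_pos_of_pos (by norm_num) α).le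
  have hr1 : r < 1 := Real.rpow_lt_one (by norm_num) (by norm_num) hα0
  rw [birkhoff, birkhoff, ← Finset.sum_sub_distrib]
  calc |∑ i ∈ Finset.range n, (f (shift^[i] (concatAt n x y)) - f (shift^[i] x))|
      ≤ ∑ i ∈ Finset.range n, |f (shift^[i] (concatAt n x y)) - f (shift^[i] x)| :=
        Finset.abs_sum_le_sum_abs _ _
    _ ≤ ∑ i ∈ Finset.range n, C * r^(n-i) := by
        apply Finset.sum_le_sum
        intro i hi
        have hi' := Finset.mem_range.mp hi
        have hd : dOmega (shift^[i] (concatAt n x y)) (shift^[i] x) ≤ (1/2:ℝ)^(n-i) := by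
          apply dOmega_le_pow
          intro j hj
          rw [shift_iterate, shift_iterate]
          simp only [concatAt]
          rw [if_pos (by omega)]
        calc |f (shift^[i] (concatAt n x y)) - f (shift^[i] x)|
            ≤ C * dOmega (shift^[i] (concatAt n x y)) (shift^[i] x) ^ α := hC _ _
          _ ≤ C * ((1/2:ℝ)^(n-i)) ^ α := by
              apply mul_le_mul_of_nonneg_left _ hC0
              exact Real.rpow_le_rpow (dOmega_nonneg _ _) hd hα0.le
          _ = C * r^(n-i) := by rw [pow_rpow_half α]
    _ = C * ∑ i ∈ Finset.range n, r^(n-i) := by rw [Finset.mul_sum]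
    _ ≤ C * (1-r)⁻¹ := mul_le_mul_of_nonneg_left (geom_sum_bound r hr0 hr1 n) hC0


lemma continuous_shift : Continuous (shift : (ℕ → A) → (ℕ → A)) :=
  continuous_pi fun n => continuous_apply (n+1)

lemma map_shift_iterate (μ : Measure (ℕ → A)) (hinv : μ.map shift = μ) (i : ℕ) :
    μ.map (shift^[i]) = μ := by
  induction i with
  | zero => simp
  | succ i ih =>
    rw [Function.iterate_succ', ← Measure.map_map continuous_shift.measurable
      (continuous_shift.measurable.iterate i), ih, hinv]

/-- If `f` is `α`-Hölder then for every shift-invariant Borel probability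
measure `μ` and every `y ∈ Ω`,
`lim_n (1/n) ∫ S_n(f)(x_{Λ_n} y_{Λ_n^c}) dμ(x) = ∫ f dμ`. -/
theorem statement6
    (α : ℝ) (hα0 : 0 < α) (hα1 : α < 1)
    (f : (ℕ → A) → ℝ) (hf : IsHolder α f)
    (μ : Measure (ℕ → A)) [IsProbabilityMeasure μ]
    (hinv : μ.map shift = μ) (y : ℕ → A) :
    Tendsto (fun n : ℕ => (n : ℝ)⁻¹ * ∫ x, birkhoff n f (concatAt n x y) ∂μ)
      atTop (nhds (∫ x, f x ∂μ)) := by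
  obtain ⟨C, hC0, hC⟩ := hf
  have hfc : Continuous f := continuous_of_holder hα0 hC
  have hint : ∀ (g : (ℕ → A) → ℝ), Continuous g → Integrable g μ := fun g hg =>
    integrableOn_univ.mp (hg.continuousOn.integrableOn_compact isCompact_univ)
  have hcc : ∀ n : ℕ, Continuous (fun x : ℕ → A => concatAt n x y) := by
    intro n
    apply continuous_pi
    intro i
    unfold concatAt
    by_cases h : i < n
    · simp only [h, if_true]; exact continuous_apply i
    · simp only [h, if_false]; exact continuous_const
  have hbc : ∀ n : ℕ, Continuous (birkhoff n f) := by
    intro n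
    unfold birkhoff
    exact continuous_finset_sum _ fun i _ => hfc.comp (continuous_shift.iterate i)
  set L := ∫ x, f x ∂μ with hL
  have hι : ∀ i : ℕ, ∫ x, f (shift^[i] x) ∂μ = L := by
    intro i
    calc ∫ x, f (shift^[i] x) ∂μ = ∫ x, f x ∂(μ.map (shift^[i])) :=
          (integral_map (continuous_shift.measurable.iterate i).aemeasurable
            hfc.aestronglyMeasurable).symm
      _ = L := by rw [map_shift_iterate μ hinv i]
  have hbint : ∀ n : ℕ, ∫ x, birkhoff n f x ∂μ = n * L := by
    intro n
    simp only [birkhoff]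
    rw [integral_finset_sum _ fun i _ => hint (fun x => f (shift^[i] x)) (hfc.comp (continuous_shift.iterate i))]
    simp [hι, Finset.sum_const, mul_comm]
  set r := (1/2:ℝ)^α with hr
  have hr0 : 0 ≤ r := (Real.rpow_pos_of_pos (by norm_num) α).le
  have hr1 : r < 1 := Real.rpow_lt_one (by norm_num) (by norm_num) hα0
  set M := C * (1-r)⁻¹ with hM
  have hM0 : 0 ≤ M := mul_nonneg hC0 (inv_nonneg.mpr (by linarith))
  rw [← tendsto_sub_nhds_zero_iff]
  apply squeeze_zero_norm' (a := fun n : ℕ => M * (n:ℝ)⁻¹)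
  · filter_upwards [eventually_ge_atTop 1] with n hn
    have hn0 : (0:ℝ) < n := by exact_mod_cast Nat.pos_of_ne_zero (by omega)
    have key : |(∫ x, birkhoff n f (concatAt n x y) ∂μ) - n * L| ≤ M := by
      rw [← hbint n,
        ← integral_sub (hint (fun x => birkhoff n f (concatAt n x y)) ((hbc n).comp (hcc n)))
          (hint (fun x => birkhoff n f x) (hbc n))]
      have h2 := norm_integral_le_of_norm_le_const (μ := μ)
        (f := fun x => birkhoff n f (concatAt n x y) - birkhoff n f x) (C := M)
        (Filter.Eventually.of_forall fun x => by
          rw [Real.norm_eq_abs]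
          exact birkhoff_bound α C hα0 hC0 f hC n x y)
      simpa [measure_univ] using h2
    have heq : (n:ℝ)⁻¹ * (∫ x, birkhoff n f (concatAt n x y) ∂μ) - L
        = (n:ℝ)⁻¹ * ((∫ x, birkhoff n f (concatAt n x y) ∂μ) - n * L) := by
      field_simp
    rw [heq, Real.norm_eq_abs, abs_mul, abs_of_nonneg (inv_nonneg.mpr hn0.le), mul_comm]
    exact mul_le_mul_of_nonneg_right key (inv_nonneg.mpr hn0.le)
  · simpa using (tendsto_inv_atTop_nhds_zero_nat).const_mul M

end Paper
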